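/- Let A_1,…,A_p ∈ Mat_N(k) and A := Σ_{j=1}^{p} A_j, and consider over the polynomial ring k[q] the ordered product M := (1 + (q−1)·A_1)(1 + (q−1)·A_2)⋯(1 + (q−1)·A_p) ∈ Mat_N(k[q]). If every coefficient of the characteristic polynomial of M (an element of k[q]) lies in the subalgebra k[q^p] (polynomials in q^p), then the characteristic polynomial of M equals the characteristic polynomial of 1 + p^{−1}(q^p − 1)·A (where A is viewed in Mat_N(k[q]) and p^{−1} is the inverse of the image of p in k). -/

import Mathlib

open Matrix Polynomial

section Helpers

variable {k : Type} [Field k] {N : ℕ}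

private lemma qp_charpoly_comp_X_add_C {S : Type} [CommRing S] (Z : Matrix (Fin N) (Fin N) S)
    (a : S) :
    Z.charpoly.comp (X + C a) = (Z - a • (1 : Matrix (Fin N) (Fin N) S)).charpoly := by

  have h0 : Z.charpoly.comp (X + C a) = (eval₂RingHom C (X + C a)) Z.charpoly := rfl
  rw [h0, Matrix.charpoly, Matrix.charpoly, RingHom.map_det, RingHom.mapMatrix_apply]
  congr 1
  apply Matrix.ext; intro i j
  by_cases h : i = j
  · subst h
    rw [Matrix.map_apply, charmatrix_apply_eq, charmatrix_apply_eq]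
    simp only [coe_eval₂RingHom, eval₂_sub, eval₂_X, eval₂_C, Matrix.sub_apply,
      Matrix.smul_apply, Matrix.one_apply_eq, smul_eq_mul, mul_one, C_sub]
    ring
  · rw [Matrix.map_apply, charmatrix_apply_ne _ _ _ h, charmatrix_apply_ne _ _ _ h]
    simp only [coe_eval₂RingHom, eval₂_neg, eval₂_C, Matrix.sub_apply, Matrix.smul_apply,
      Matrix.one_apply_ne h, smul_eq_mul, mul_zero, sub_zero]

private lemma qp_charpoly_smul_comp {S : Type} [CommRing S] (r : S)
    (Y : Matrix (Fin N) (Fin N) S) :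
    (r • Y).charpoly.comp (C r * X) = C (r ^ N) * Y.charpoly := by

  have h0 : (r • Y).charpoly.comp (C r * X) = (eval₂RingHom C (C r * X)) (r • Y).charpoly := rfl
  rw [h0, Matrix.charpoly, Matrix.charpoly, RingHom.map_det, RingHom.mapMatrix_apply]
  have hmat : (charmatrix (r • Y)).map (eval₂RingHom C (C r * X)) = (C r : S[X]) • charmatrix Y := by
    apply Matrix.ext; intro i j
    by_cases h : i = j
    · subst h
      rw [Matrix.map_apply]
      simp only [Matrix.smul_apply, charmatrix_apply_eq, coe_eval₂RingHom, eval₂_sub,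
        eval₂_X, eval₂_C, eval₂_mul, smul_eq_mul, C_mul]
      ring
    · rw [Matrix.map_apply]
      simp only [Matrix.smul_apply, charmatrix_apply_ne _ _ _ h, coe_eval₂RingHom, eval₂_neg, eval₂_mul,
        eval₂_C, smul_eq_mul, mul_neg, C_mul]
  rw [hmat, Matrix.det_smul, Fintype.card_fin, ← C_pow]

private lemma qp_coeff_comp_C_mul_X {S : Type} [CommRing S] (f : S[X]) (r : S) (β : ℕ) :
    (f.comp (C r * X)).coeff β = f.coeff β * r ^ β := by

  induction f using Polynomial.induction_on' with
  | add f g hf hg => simp [add_comp, hf, hg, add_mul]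
  | monomial n a =>
      rw [monomial_comp, mul_pow, ← C_pow, ← mul_assoc, ← C_mul, coeff_C_mul, coeff_X_pow,
        coeff_monomial]
      split_ifs with h1 h2 h3
      · subst h2; ring
      · simp_all
      · omega
      · simp

private lemma qp_coeff_comp_X_add_one {p : ℕ} (F : Polynomial (Polynomial k))
    (hF : ∀ j : ℕ, ∃ g : Polynomial k, F.coeff j = g.comp (X ^ p)) (β : ℕ) :
    ∃ g : Polynomial k, (F.comp (X + C 1)).coeff β = g.comp (X ^ p) := by

  have hmem : ∀ x : Polynomial k, (∃ g : Polynomial k, x = g.comp (X ^ p)) ↔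
      x ∈ (Polynomial.aeval (X ^ p : Polynomial k) : Polynomial k →ₐ[k] Polynomial k).range := by
    intro x
    constructor
    · rintro ⟨g, rfl⟩; exact ⟨g, rfl⟩
    · rintro ⟨g, rfl⟩; exact ⟨g, rfl⟩
  rw [hmem]
  rw [← taylor_apply, taylor_coeff, eval_eq_sum_range]
  apply Subalgebra.sum_mem
  intro i _
  rw [one_pow, mul_one, hasseDeriv_coeff]
  have := (hmem (F.coeff (i + β))).mp (hF (i + β))
  have hn : ((i + β).choose β : Polynomial k) ∈ (Polynomial.aeval (X ^ p : Polynomial k) : Polynomial k →ₐ[k] Polynomial k).range :=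
    Subalgebra.natCast_mem _ _
  exact mul_mem hn this

private def QB (d a : ℕ) (f : Polynomial (Polynomial k)) : Prop :=
  ∀ j : ℕ, ((f.coeff j).natDegree ≤ d * (a - j)) ∧ (a < j → f.coeff j = 0)

private lemma QB_one {d : ℕ} : QB (k := k) d 0 1 := by
  intro j
  constructor
  · match j with
    | 0 => simp
    | j + 1 => simp [coeff_one]
  · intro hj
    have hne : ¬ j = 0 := by omega
    simp [coeff_one, hne]

private lemma QB_mul {d a b : ℕ} {f g : Polynomial (Polynomial k)}
    (hf : QB d a f) (hg : QB d b g) : QB d (a + b) (f * g) := by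
  intro β
  constructor
  · rw [coeff_mul]
    apply natDegree_sum_le_of_forall_le
    rintro ⟨j1, j2⟩ hj
    rw [Finset.HasAntidiagonal.mem_antidiagonal] at hj
    by_cases h1 : a < j1
    · simp [(hf j1).2 h1]
    by_cases h2 : b < j2
    · simp [(hg j2).2 h2]
    calc natDegree (f.coeff j1 * g.coeff j2)
        ≤ natDegree (f.coeff j1) + natDegree (g.coeff j2) := natDegree_mul_le
      _ ≤ d * (a - j1) + d * (b - j2) := add_le_add (hf j1).1 (hg j2).1
      _ ≤ d * (a + b - β) := by rw [← Nat.mul_add]; apply Nat.mul_le_mul_left; omega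
  · intro hβ
    rw [coeff_mul]
    apply Finset.sum_eq_zero
    rintro ⟨j1, j2⟩ hj
    rw [Finset.HasAntidiagonal.mem_antidiagonal] at hj
    rcases (by omega : a < j1 ∨ b < j2) with h | h
    · rw [(hf j1).2 h, zero_mul]
    · rw [(hg j2).2 h, mul_zero]

private lemma QB_sum {d a : ℕ} {ι : Type} (s : Finset ι) (F : ι → Polynomial (Polynomial k))
    (h : ∀ i ∈ s, QB d a (F i)) : QB d a (∑ i ∈ s, F i) := by
  intro j
  constructor
  · rw [finset_sum_coeff]
    exact natDegree_sum_le_of_forall_le _ _ fun i hi => (h i hi j).1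
  · intro hj
    rw [finset_sum_coeff]
    exact Finset.sum_eq_zero fun i hi => (h i hi j).2 hj

private lemma QB_intCast_mul {d a : ℕ} {f : Polynomial (Polynomial k)} (z : ℤ)
    (hf : QB d a f) : QB d a ((z : Polynomial (Polynomial k)) * f) := by
  intro j
  have hz : (z : Polynomial (Polynomial k)) = C ((z : Polynomial k)) := by
    simp
  rw [hz, coeff_C_mul]
  constructor
  · refine le_trans natDegree_mul_le ?_
    simpa using (hf j).1
  · intro hj; rw [(hf j).2 hj, mul_zero]

private lemma QB_prod {d : ℕ} {ι : Type} (s : Finset ι) (F : ι → Polynomial (Polynomial k))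
    (h : ∀ i ∈ s, QB d 1 (F i)) : QB d s.card (∏ i ∈ s, F i) := by
  induction s using Finset.cons_induction with
  | empty => simpa using QB_one
  | cons a s ha ih =>
      rw [Finset.prod_cons, Finset.card_cons, Nat.add_comm]
      exact QB_mul (h a (Finset.mem_cons_self a s))
        (ih fun i hi => h i (Finset.mem_cons_of_mem hi))

private lemma QB_charmatrix {d : ℕ} (W : Matrix (Fin N) (Fin N) (Polynomial k))
    (hd : ∀ i j, (W i j).natDegree ≤ d) (i j : Fin N) :
    QB d 1 (charmatrix W i j) := by
  by_cases h : i = j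
  · subst h
    rw [charmatrix_apply_eq]
    intro m
    constructor
    · match m with
      | 0 => simpa [coeff_X, coeff_C] using natDegree_neg (W i i) ▸ hd i i
      | 1 => simp [coeff_X, coeff_C]
      | m + 2 => simp [coeff_X, coeff_C]
    · intro hm
      match m with
      | m + 2 => simp [coeff_X, coeff_C]
  · rw [charmatrix_apply_ne _ _ _ h]
    intro m
    constructor
    · match m with
      | 0 => simpa [coeff_C] using natDegree_neg (W i j) ▸ hd i j
      | m + 1 => simp [coeff_C]
    · intro hm
      match m with
      | m + 1 => simp [coeff_C]

private lemma charpoly_coeff_natDegree_le (d : ℕ) (W : Matrix (Fin N) (Fin N) (Polynomial k))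
    (h : ∀ i j, (W i j).natDegree ≤ d) (β : ℕ) :
    ((W.charpoly).coeff β).natDegree ≤ d * (N - β) := by
  have hQ : QB d N W.charpoly := by
    rw [Matrix.charpoly, Matrix.det_apply']
    apply QB_sum
    intro σ _
    have := QB_intCast_mul (Equiv.Perm.sign σ : ℤ)
      (QB_prod Finset.univ _ fun i _ => QB_charmatrix W h (σ i) i)
    simpa using this
  exact (hQ β).1

-- product structure: first order expansion
private lemma prod_one_add_smul (c : Polynomial k) (l : List (Matrix (Fin N) (Fin N) (Polynomial k))) :
    ∃ Err : Matrix (Fin N) (Fin N) (Polynomial k),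
      (l.map (fun B => 1 + c • B)).prod = 1 + c • l.sum + (c ^ 2) • Err := by
  induction l with
  | nil => exact ⟨0, by simp⟩
  | cons B l ih =>
      obtain ⟨E, hE⟩ := ih
      refine ⟨E + B * l.sum + c • (B * E), ?_⟩
      rw [List.map_cons, List.prod_cons, hE, List.sum_cons]
      simp only [mul_add, add_mul, one_mul, mul_one, smul_add, smul_smul,
        smul_mul_assoc, mul_smul_comm, pow_two]
      abel

-- entries degree bound
private lemma prod_entry_natDegree_le (l : List (Matrix (Fin N) (Fin N) (Polynomial k)))
    (h : ∀ B ∈ l, ∀ i j, (B i j).natDegree ≤ 1) :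
    ∀ i j, ((l.prod) i j).natDegree ≤ l.length := by
  induction l with
  | nil =>
      intro i j
      rcases eq_or_ne i j with rfl | hne
      · simp [Matrix.one_apply_eq]
      · simp [Matrix.one_apply_ne hne]
  | cons B l ih =>
      intro i j
      rw [List.prod_cons, List.length_cons, Matrix.mul_apply]
      apply natDegree_sum_le_of_forall_le
      intro m _
      refine le_trans natDegree_mul_le ?_
      have h1 : (B i m).natDegree ≤ 1 := h B List.mem_cons_self i m
      have h2 := ih (fun B' hB' => h B' (List.mem_cons_of_mem _ hB')) m j
      omega

private lemma qp_key_lemma {k : Type} [Field k] {p : ℕ} (hp1 : 1 ≤ p) (hp : (p : k) ≠ 0)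
    (K : ℕ) (c cY : Polynomial k) (E : k)
    (hcomp : ∃ g : Polynomial k, c = g.comp (X ^ p))
    (hdeg : c.natDegree ≤ p * K)
    (hfac : c = (X - C 1) ^ K * cY)
    (hev : cY.eval 1 = E) :
    c = (C ((p : k)⁻¹) * (X ^ p - 1)) ^ K * C E := by
  obtain ⟨g, hg⟩ := hcomp
  have hXC : (X - C 1 : Polynomial k) ≠ 0 := X_sub_C_ne_zero 1
  have hXCK : ((X - C 1 : Polynomial k) ^ K) ≠ 0 := pow_ne_zero _ hXC
  -- geometric sum s
  set s : Polynomial k := ∑ i ∈ Finset.range p, X ^ i with hs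
  have hgeom : (X ^ p - 1 : Polynomial k) = (X - C 1) * s := by
    rw [C_1, mul_comm]
    exact (geom_sum_mul (X : Polynomial k) p).symm
  have hseval : s.eval 1 = (p : k) := by
    simp [hs, eval_finset_sum]
  by_cases hc0 : c = 0
  · -- degenerate case
    have hcY : cY = 0 := by
      rcases mul_eq_zero.mp (hfac ▸ hc0 : (X - C 1) ^ K * cY = 0) with h | h
      · exact absurd h hXCK
      · exact h
    rw [hc0, ← hev, hcY]
    simp
  · have hg0 : g ≠ 0 := by
      rintro rfl
      simp at hg
      exact hc0 hg
    have hXp : (X ^ p : Polynomial k).natDegree = p := natDegree_X_pow p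
    have hdegc : c.natDegree = g.natDegree * p := by
      rw [hg, natDegree_comp, hXp]
    have hdegg : g.natDegree ≤ K := by
      apply Nat.le_of_mul_le_mul_left _ (show 0 < p by omega)
      calc p * g.natDegree = g.natDegree * p := Nat.mul_comm _ _
        _ = c.natDegree := hdegc.symm
        _ ≤ p * K := hdeg
    -- root multiplicity decomposition of g at 1
    set m : ℕ := rootMultiplicity 1 g with hm
    set h : Polynomial k := g /ₘ (X - C 1) ^ m with hh
    have hfacg : (X - C 1) ^ m * h = g := pow_mul_divByMonic_rootMultiplicity_eq g 1
    have hh1 : h.eval 1 ≠ 0 := eval_divByMonic_pow_rootMultiplicity_ne_zero 1 hg0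
    have hh0 : h ≠ 0 := fun h0 => hh1 (by rw [h0]; simp)
    -- m ≤ natDegree g
    have hmle : m ≤ g.natDegree := by
      have h1 := Polynomial.natDegree_le_of_dvd (pow_rootMultiplicity_dvd g 1) hg0
      rwa [natDegree_pow, natDegree_X_sub_C, mul_one] at h1
    -- c = (X - C 1)^m * (s^m * h.comp (X^p))
    have hcfac : c = (X - C 1) ^ m * (s ^ m * h.comp (X ^ p)) := by
      rw [hg, ← hfacg, mul_comp, pow_comp, sub_comp, X_comp, C_comp, C_1, hgeom, mul_pow]
      simp only [C_1]
      ring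
    have hu1 : (s ^ m * h.comp (X ^ p)).eval 1 ≠ 0 := by
      rw [eval_mul, eval_pow, hseval, eval_comp, eval_pow, eval_X, one_pow]
      exact mul_ne_zero (pow_ne_zero _ hp) hh1
    -- K ≤ m
    have hKm : K ≤ m := by
      by_contra hlt
      push_neg at hlt
      have hdvd : (X - C 1) ^ (m + 1) ∣ c := by
        rw [hfac]
        exact Dvd.dvd.mul_right (pow_dvd_pow _ (by omega)) cY
      rw [hcfac] at hdvd
      have : (X - C 1) ∣ (s ^ m * h.comp (X ^ p)) := by
        have hcancel : (X - C 1) ^ m * (X - C 1) ∣ (X - C 1) ^ m * (s ^ m * h.comp (X ^ p)) := by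
          rw [← pow_succ]
          exact hdvd
        exact (mul_dvd_mul_iff_left (pow_ne_zero m hXC)).mp hcancel
      have := (dvd_iff_isRoot).mp this
      rw [IsRoot.def] at this
      exact hu1 this
    have hmK : m = K := le_antisymm (le_trans hmle hdegg) hKm
    -- h is a constant
    have hdegh : h.natDegree = 0 := by
      have := natDegree_mul (pow_ne_zero m hXC) hh0
      rw [hfacg] at this
      rw [natDegree_pow, natDegree_X_sub_C, mul_one] at this
      omega
    obtain ⟨e, he⟩ : ∃ e : k, h = C e := ⟨h.coeff 0, eq_C_of_natDegree_eq_zero hdegh⟩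
    have heval : h.eval 1 = e := by rw [he, eval_C]
    -- c = (X^p - 1)^K * C e
    have hcK : c = (X ^ p - 1) ^ K * C e := by
      rw [hcfac, hmK, he, hgeom, mul_pow, C_comp]
      ring
    -- identify cY
    have hcY : cY = s ^ K * C e := by
      apply mul_left_cancel₀ hXCK
      rw [← hfac, hcK, hgeom, mul_pow]
      simp only [C_1]
      ring
    have hE : E = (p : k) ^ K * e := by
      rw [← hev, hcY, eval_mul, eval_pow, hseval, eval_C]
    have harith : ((p : k)⁻¹) ^ K * ((p : k) ^ K * e) = e := by
      rw [← mul_assoc, inv_pow, inv_mul_cancel₀ (pow_ne_zero _ hp), one_mul]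
    rw [hcK, hE, mul_pow, ← C_pow, mul_comm (C (((p : k)⁻¹) ^ K)) ((X ^ p - 1) ^ K), mul_assoc,
      ← C_mul, harith]

end Helpers

/-- Let `A_1,…,A_p` be matrices over `k` (with `p` invertible in `k`) and consider
`M := Π_j (1 + (q−1)A_j)` over `k[q]`. If every coefficient of `charpoly M` is a
polynomial in `q^p`, then `charpoly M = charpoly (1 + p⁻¹(q^p − 1)·A)` where
`A = Σ_j A_j`. -/
theorem charpoly_ordered_product_eq_of_coeffs_in_qp
    {p : ℕ} (hp1 : 1 ≤ p) {k : Type} [Field k] (hp : (p : k) ≠ 0) {N : ℕ}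
    (A : Fin p → Matrix (Fin N) (Fin N) k)
    (M : Matrix (Fin N) (Fin N) (Polynomial k))
    (hM : M = ((List.finRange p).map fun j =>
      (1 + ((X : Polynomial k) - 1) • (A j).map Polynomial.C :
        Matrix (Fin N) (Fin N) (Polynomial k))).prod)
    (hcoeff : ∀ i : ℕ, ∃ g : Polynomial k, M.charpoly.coeff i = g.comp (X ^ p)) :
    M.charpoly =
      (1 + (Polynomial.C ((p : k)⁻¹) * (X ^ p - 1)) •
        (∑ j, A j).map Polynomial.C).charpoly := by
  classical
  set c1 : Polynomial k := X - 1 with hc1def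
  have hc1C : c1 = X - C 1 := by rw [C_1]
  have hc1ne : c1 ≠ 0 := by rw [hc1C]; exact X_sub_C_ne_zero 1
  set Atot : Matrix (Fin N) (Fin N) k := ∑ j, A j with hAtot
  set r' : Polynomial k := C ((p : k)⁻¹) * (X ^ p - 1) with hr'
  have hXp1ne : (X ^ p - 1 : Polynomial k) ≠ 0 := by
    intro h0
    have h1 := congrArg (eval 0) h0
    have hpne : p ≠ 0 := by omega
    simp [zero_pow hpne] at h1
  have hr'ne : r' ≠ 0 :=
    mul_ne_zero (fun hC => (inv_ne_zero hp) (by simpa using hC)) hXp1ne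
  -- list of mapped matrices
  set l : List (Matrix (Fin N) (Fin N) (Polynomial k)) :=
    (List.finRange p).map (fun j => (A j).map C) with hl
  have hMl : M = (l.map (fun B => 1 + c1 • B)).prod := by
    rw [hM, hl, List.map_map]
    rfl
  have hlsum : l.sum = Atot.map C := by
    rw [hl, ← Fin.sum_univ_def (fun j => (A j).map C)]
    ext i j
    simp [Matrix.sum_apply, Matrix.map_apply, hAtot, map_sum]
  -- first-order expansion of M
  obtain ⟨Err, hErr⟩ := prod_one_add_smul c1 l
  rw [hlsum] at hErr
  set Y : Matrix (Fin N) (Fin N) (Polynomial k) := Atot.map C + c1 • Err with hY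
  have hWfac : M - 1 = c1 • Y := by
    rw [hMl, hErr, hY]
    rw [smul_add, smul_smul, ← pow_two]
    abel
  -- degree bounds for entries of M - 1
  have hdegM : ∀ i j, ((M - 1) i j).natDegree ≤ p := by
    have hfactors : ∀ B ∈ l.map (fun B => 1 + c1 • B), ∀ i j, (B i j).natDegree ≤ 1 := by
      intro B hB i' j'
      rw [List.mem_map] at hB
      obtain ⟨B', hB', rfl⟩ := hB
      rw [hl, List.mem_map] at hB'
      obtain ⟨j0, _, rfl⟩ := hB'
      have hentry : ((1 + c1 • (A j0).map C) i' j')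
          = (1 : Matrix (Fin N) (Fin N) (Polynomial k)) i' j' + c1 * C (A j0 i' j') := by
        simp [Matrix.add_apply, Matrix.smul_apply, smul_eq_mul, Matrix.map_apply]
      rw [hentry]
      refine le_trans (natDegree_add_le _ _) ?_
      have h1 : ((1 : Matrix (Fin N) (Fin N) (Polynomial k)) i' j').natDegree = 0 := by
        rcases eq_or_ne i' j' with rfl | hne
        · simp [Matrix.one_apply_eq]
        · simp [Matrix.one_apply_ne hne]
      have h2 : (c1 * C (A j0 i' j')).natDegree ≤ 1 := by
        refine le_trans natDegree_mul_le ?_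
        have hcd : c1.natDegree = 1 := by rw [hc1C]; exact natDegree_X_sub_C 1
        simp [hcd]
      omega
    intro i j
    have hMdeg : (M i j).natDegree ≤ p := by
      have hlen : (l.map (fun B => 1 + c1 • B)).length = p := by
        rw [hl]; simp
      have := prod_entry_natDegree_le (l.map (fun B => 1 + c1 • B)) hfactors i j
      rw [← hMl, hlen] at this
      exact this
    rw [Matrix.sub_apply]
    refine le_trans (natDegree_sub_le _ _) ?_
    have h1 : ((1 : Matrix (Fin N) (Fin N) (Polynomial k)) i j).natDegree = 0 := by
      rcases eq_or_ne i j with rfl | hne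
      · simp [Matrix.one_apply_eq]
      · simp [Matrix.one_apply_ne hne]
    omega
  -- shifted charpoly of M
  have hWcp : (M - 1).charpoly = M.charpoly.comp (X + C 1) := by
    rw [qp_charpoly_comp_X_add_C M 1, one_smul]
  -- membership of shifted coefficients
  have hcoeffW : ∀ β : ℕ, ∃ g : Polynomial k, ((M - 1).charpoly).coeff β = g.comp (X ^ p) := by
    intro β
    rw [hWcp]
    exact qp_coeff_comp_X_add_one M.charpoly hcoeff β
  -- the target matrix, minus 1
  set V : Matrix (Fin N) (Fin N) (Polynomial k) := r' • (Atot.map C) with hV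
  -- main coefficient identity
  have hmain : (M - 1).charpoly = V.charpoly := by
    apply Polynomial.ext
    intro β
    rcases le_or_gt β N with hβ | hβ
    · set K : ℕ := N - β with hK
      have hβK : β + K = N := by omega
      -- W-side coefficient factorization
      have hWrel := congrArg (fun f => f.coeff β) (qp_charpoly_smul_comp c1 Y)
      simp only [qp_coeff_comp_C_mul_X, ← C_pow, coeff_C_mul] at hWrel
      rw [← hWfac] at hWrel
      have hWc : ((M - 1).charpoly).coeff β = c1 ^ K * (Y.charpoly.coeff β) := by
        apply mul_left_cancel₀ (pow_ne_zero β hc1ne)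
        calc c1 ^ β * ((M - 1).charpoly).coeff β
            = ((M - 1).charpoly).coeff β * c1 ^ β := mul_comm _ _
          _ = c1 ^ N * (Y.charpoly.coeff β) := hWrel
          _ = c1 ^ β * (c1 ^ K * (Y.charpoly.coeff β)) := by
              rw [← mul_assoc, ← pow_add, hβK]
      -- V-side coefficient factorization
      have hVrel := congrArg (fun f => f.coeff β) (qp_charpoly_smul_comp r' (Atot.map C))
      simp only [qp_coeff_comp_C_mul_X, ← C_pow, coeff_C_mul] at hVrel
      rw [← hV] at hVrel
      have hcoeffAtot : (Atot.map C).charpoly.coeff β = C (Atot.charpoly.coeff β) := by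
        rw [Matrix.charpoly_map Atot (C : k →+* Polynomial k), Polynomial.coeff_map]
      have hVc : (V.charpoly).coeff β = r' ^ K * C (Atot.charpoly.coeff β) := by
        apply mul_left_cancel₀ (pow_ne_zero β hr'ne)
        calc r' ^ β * (V.charpoly).coeff β
            = (V.charpoly).coeff β * r' ^ β := mul_comm _ _
          _ = r' ^ N * ((Atot.map C).charpoly.coeff β) := hVrel
          _ = r' ^ β * (r' ^ K * C (Atot.charpoly.coeff β)) := by
              rw [hcoeffAtot, ← mul_assoc, ← pow_add, hβK]
      -- evaluation of Y-coefficient at 1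
      have hYmap : Y.map (evalRingHom (1 : k)) = Atot := by
        ext i j
        rw [hY]
        simp [Matrix.map_apply, Matrix.add_apply, Matrix.smul_apply, smul_eq_mul, hc1def]
      have hevY : (Y.charpoly.coeff β).eval 1 = Atot.charpoly.coeff β := by
        have := Matrix.charpoly_map Y (evalRingHom (1 : k))
        rw [hYmap] at this
        have h2 := congrArg (fun f => f.coeff β) this
        simp only [Polynomial.coeff_map, coe_evalRingHom] at h2
        exact h2.symm
      -- apply the key lemma
      have hdegc : ((M - 1).charpoly.coeff β).natDegree ≤ p * K := by
        have := charpoly_coeff_natDegree_le p (M - 1) hdegM β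
        rwa [hK]
      have hfacc : (M - 1).charpoly.coeff β = (X - C 1) ^ K * (Y.charpoly.coeff β) := by
        rw [hWc, hc1C]
      have := qp_key_lemma hp1 hp K ((M - 1).charpoly.coeff β) (Y.charpoly.coeff β)
        (Atot.charpoly.coeff β) (hcoeffW β) hdegc hfacc hevY
      rw [this, hVc, hr']
    · -- β > N : both coefficients vanish
      have hd1 : ((M - 1).charpoly).natDegree = N := by
        rw [Matrix.charpoly_natDegree_eq_dim, Fintype.card_fin]
      have hd2 : (V.charpoly).natDegree = N := by
        rw [Matrix.charpoly_natDegree_eq_dim, Fintype.card_fin]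
      rw [coeff_eq_zero_of_natDegree_lt (by omega), coeff_eq_zero_of_natDegree_lt (by omega)]
  -- conclude
  have hfin1 : M.charpoly = ((M - 1).charpoly).comp (X + C (-1)) := by
    rw [qp_charpoly_comp_X_add_C (M - 1) (-1)]
    congr 1
    rw [neg_smul, one_smul, sub_neg_eq_add, sub_add_cancel]
  have hfin2 : (1 + r' • (Atot.map C)).charpoly = (V.charpoly).comp (X + C (-1)) := by
    rw [qp_charpoly_comp_X_add_C V (-1)]
    congr 1
    rw [neg_smul, one_smul, sub_neg_eq_add, add_comm]
  rw [hfin1, hmain, ← hfin2, hr', hAtot]
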